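/- If S and T are ordered sets such that F(S) and F(T) are both Noetherian, then F(S × T) is Noetherian. -/

import Mathlib

open Set

private def rects {S T : Type*} [PartialOrder S] [PartialOrder T] :
    List (S × T) → List (Set S × Set T)
  | [] => [(Set.univ, Set.univ)]
  | (x :: l) =>
      ((rects l).map fun p => ((Set.Ici x.1)ᶜ ∩ p.1, p.2)) ++
      ((rects l).map fun p => (p.1, (Set.Ici x.2)ᶜ ∩ p.2))

private theorem rects_lower {S T : Type*} [PartialOrder S] [PartialOrder T] :
    ∀ (l : List (S × T)), ∀ p ∈ rects l, IsLowerSet p.1 ∧ IsLowerSet p.2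
  | [] => by
      intro p hp
      simp only [rects, List.mem_singleton] at hp
      subst hp
      exact ⟨isLowerSet_univ, isLowerSet_univ⟩
  | (x :: l) => by
      intro p hp
      simp only [rects, List.mem_append, List.mem_map] at hp
      rcases hp with ⟨q, hq, rfl⟩ | ⟨q, hq, rfl⟩
      · exact ⟨((isUpperSet_Ici x.1).compl).inter (rects_lower l q hq).1,
          (rects_lower l q hq).2⟩
      · exact ⟨(rects_lower l q hq).1,
          ((isUpperSet_Ici x.2).compl).inter (rects_lower l q hq).2⟩

private theorem mem_rects {S T : Type*} [PartialOrder S] [PartialOrder T] :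
    ∀ (l : List (S × T)) (a : S) (b : T),
      ((a, b) ∈ ⋃ p ∈ rects l, p.1 ×ˢ p.2) ↔ ∀ y ∈ l, ¬ y ≤ (a, b)
  | [] => by
      intro a b
      simp [rects]
  | (x :: l) => by
      intro a b
      have ih := mem_rects l a b
      simp only [rects, List.mem_append, List.mem_map, mem_iUnion, exists_prop] at *
      constructor
      · rintro ⟨p, ⟨q, hq, rfl⟩ | ⟨q, hq, rfl⟩, hmem⟩
        · rcases hmem with ⟨⟨ha1, ha2⟩, hb⟩
          intro y hy
          rcases List.mem_cons.1 hy with rfl | hy'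
          · intro hle
            exact ha1 hle.1
          · exact ih.1 ⟨q, hq, ha2, hb⟩ y hy'
        · rcases hmem with ⟨ha, hb1, hb2⟩
          intro y hy
          rcases List.mem_cons.1 hy with rfl | hy'
          · intro hle
            exact hb1 hle.2
          · exact ih.1 ⟨q, hq, ha, hb2⟩ y hy'
      · intro h
        have hx : ¬ x ≤ (a, b) := h x (List.mem_cons_self (a := x) (l := l))
        have hrest : ∀ y ∈ l, ¬ y ≤ (a, b) := fun y hy => h y (List.mem_cons_of_mem x hy)
        obtain ⟨q, hq, hqa, hqb⟩ := ih.2 hrest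
        rw [Prod.le_def, not_and_or] at hx
        rcases hx with hx | hx
        · exact ⟨_, Or.inl ⟨q, hq, rfl⟩, ⟨hx, hqa⟩, hqb⟩
        · exact ⟨_, Or.inr ⟨q, hq, rfl⟩, hqa, hx, hqb⟩

private theorem fg_upper {X : Type*} [PartialOrder X] (hX : (Set.univ : Set X).IsPWO)
    {U : Set X} (hU : IsUpperSet U) : ∃ l : List X, U = ⋃ x ∈ l, Set.Ici x := by
  classical
  set B := {x ∈ U | ∀ y ∈ U, y ≤ x → x ≤ y} with hB
  have hBsub : B ⊆ U := fun x hx => hx.1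
  have hanti : IsAntichain (· ≤ ·) B := by
    intro x hx y hy hxy h
    exact hxy (le_antisymm h (hy.2 x hx.1 h))
  have hfin : B.Finite :=
    hanti.finite_of_partiallyWellOrderedOn (hX.mono (Set.subset_univ B))
  have hWF : U.IsWF := (hX.mono (Set.subset_univ U)).isWF
  refine ⟨hfin.toFinset.toList, ?_⟩
  ext x
  simp only [mem_iUnion, Finset.mem_toList, Set.Finite.mem_toFinset, exists_prop, Set.mem_Ici]
  constructor
  · intro hx
    have hVwf : IsWF {y ∈ U | y ≤ x} := hWF.mono (fun y hy => hy.1)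
    have hVne : {y ∈ U | y ≤ x}.Nonempty := ⟨x, hx, le_rfl⟩
    set m := hVwf.min hVne with hm
    have hmmem := hVwf.min_mem hVne
    refine ⟨m, ⟨hmmem.1, ?_⟩, hmmem.2⟩
    intro y hy hyx
    have hymem : y ∈ {y ∈ U | y ≤ x} := ⟨hy, le_trans hyx hmmem.2⟩
    have := hVwf.not_lt_min hVne hymem
    have : y = m := by_contra fun hne => this (lt_of_le_of_ne hyx hne)
    exact this.ge
  · rintro ⟨m, hmB, hmx⟩
    exact hU hmx (hBsub hmB)

private theorem sublistForall₂_exists {α : Type*} {r : α → α → Prop}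
    {l₁ l₂ : List α} (h : List.SublistForall₂ r l₁ l₂) :
    ∀ a ∈ l₁, ∃ b ∈ l₂, r a b := by
  induction h with
  | nil => intro a ha; exact absurd ha List.not_mem_nil
  | @cons a b l₁ l₂ hab _ ih =>
      intro c hc
      rcases List.mem_cons.1 hc with rfl | hc'
      · exact ⟨b, List.mem_cons_self, hab⟩
      · obtain ⟨d, hd, hrd⟩ := ih c hc'
        exact ⟨d, List.mem_cons_of_mem _ hd, hrd⟩
  | @cons_right b l₁ l₂ _ ih =>
      intro c hc
      obtain ⟨d, hd, hrd⟩ := ih c hc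
      exact ⟨d, List.mem_cons_of_mem _ hd, hrd⟩

/-- If the sets of final segments of `S` and of `T` (ordered by reverse inclusion) are
both Noetherian, then so is the set of final segments of `S × T`. -/
theorem stmt_9 {S T : Type*} [PartialOrder S] [PartialOrder T]
    (hS : ∀ F : ℕ → {A : Set S // IsUpperSet A},
      ∃ i j : ℕ, i < j ∧ (F j : Set S) ⊆ (F i : Set S))
    (hT : ∀ F : ℕ → {A : Set T // IsUpperSet A},
      ∃ i j : ℕ, i < j ∧ (F j : Set T) ⊆ (F i : Set T)) :
    ∀ F : ℕ → {A : Set (S × T) // IsUpperSet A},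
      ∃ i j : ℕ, i < j ∧ (F j : Set (S × T)) ⊆ (F i : Set (S × T)) := by
  classical
  intro F
  -- S and T are wqo
  have hwS : (Set.univ : Set S).IsPWO := by
    refine partiallyWellOrderedOn_iff_exists_lt.2 ?_; intro f _
    obtain ⟨i, j, hij, hsub⟩ := hS fun n => ⟨Set.Ici (f n), isUpperSet_Ici _⟩
    exact ⟨i, j, hij, hsub (Set.mem_Ici.2 le_rfl)⟩
  have hwT : (Set.univ : Set T).IsPWO := by
    refine partiallyWellOrderedOn_iff_exists_lt.2 ?_; intro f _
    obtain ⟨i, j, hij, hsub⟩ := hT fun n => ⟨Set.Ici (f n), isUpperSet_Ici _⟩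
    exact ⟨i, j, hij, hsub (Set.mem_Ici.2 le_rfl)⟩
  have hwST : (Set.univ : Set (S × T)).IsPWO := by
    have := hwS.prod hwT
    rwa [Set.univ_prod_univ] at this
  -- each upper set of S × T is finitely generated
  have hfg : ∀ n, ∃ l : List (S × T), (F n : Set (S × T)) = ⋃ x ∈ l, Set.Ici x :=
    fun n => fg_upper hwST (F n).2
  choose L hL using hfg
  -- lower sets of S and T are PWO under ⊆
  have hlowS : {A : Set S | IsLowerSet A}.IsPWO := by
    refine partiallyWellOrderedOn_iff_exists_lt.2 ?_; intro f hf
    obtain ⟨i, j, hij, hsub⟩ := hS fun n => ⟨(f n)ᶜ, (hf n).compl⟩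
    exact ⟨i, j, hij, compl_subset_compl.1 hsub⟩
  have hlowT : {A : Set T | IsLowerSet A}.IsPWO := by
    refine partiallyWellOrderedOn_iff_exists_lt.2 ?_; intro f hf
    obtain ⟨i, j, hij, hsub⟩ := hT fun n => ⟨(f n)ᶜ, (hf n).compl⟩
    exact ⟨i, j, hij, compl_subset_compl.1 hsub⟩
  have hprod := hlowS.prod hlowT
  -- Higman's lemma
  have hhig := hprod.partiallyWellOrderedOn_sublistForall₂ (· ≤ ·)
  obtain ⟨i, j, hij, hsub⟩ := hhig.exists_lt (f := fun n => rects (L n)) (by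
    intro n
    intro p hp
    exact ⟨(rects_lower (L n) p hp).1, (rects_lower (L n) p hp).2⟩)
  refine ⟨i, j, hij, ?_⟩
  -- show (F i)ᶜ ⊆ (F j)ᶜ
  have hcompl : ((F i : Set (S × T)))ᶜ ⊆ ((F j : Set (S × T)))ᶜ := by
    rintro ⟨a, b⟩ hab
    have hmem : ((a, b) : S × T) ∈ ⋃ p ∈ rects (L i), p.1 ×ˢ p.2 := by
      rw [mem_rects]
      intro y hy hle
      exact hab (by
        rw [hL i]
        exact Set.mem_iUnion₂.2 ⟨y, hy, hle⟩)
    obtain ⟨s, hs, hmem'⟩ := Set.mem_iUnion₂.1 hmem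
    obtain ⟨q, hq, hpq⟩ := sublistForall₂_exists hsub s hs
    have : ((a, b) : S × T) ∈ ⋃ p ∈ rects (L j), p.1 ×ˢ p.2 :=
      Set.mem_iUnion₂.2 ⟨q, hq, ⟨hpq.1 hmem'.1, hpq.2 hmem'.2⟩⟩
    rw [mem_rects] at this
    intro habj
    rw [hL j] at habj
    obtain ⟨y, hy, hley⟩ := Set.mem_iUnion₂.1 habj
    exact this y hy hley
  exact fun x hx => by_contra fun hxi => hcompl hxi hx
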